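/- If two distinct voters in a profile P have preference orders that are exact reverses of each other, and P is single-peaked on a tree T with |C| ≥ 2 candidates, then T is a path and coincides with (the tree structure induced by) the common ranking: the edges of T are exactly the pairs of candidates adjacent in the first voter's ranking. -/

import Mathlib

/-- From a preconnected induced subgraph on `S`, extract a path in the ambient graph
between two members of `S` whose support stays in `S`. -/
private lemma aux_walk_in {C : Type*} {T : SimpleGraph C} {S : Set C}
    (hS : (T.induce S).Preconnected) {x y : C} (hx : x ∈ S) (hy : y ∈ S) :
    ∃ p : T.Walk x y, p.IsPath ∧ ∀ v ∈ p.support, v ∈ S := by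
  classical
  obtain ⟨w⟩ := hS ⟨x, hx⟩ ⟨y, hy⟩
  let w' : T.Walk x y := w.map (SimpleGraph.Embedding.induce S).toHom
  refine ⟨w'.bypass, w'.bypass_isPath, fun v hv => ?_⟩
  have hv' : v ∈ w'.support := w'.support_bypass_subset hv
  replace hv' : v ∈ (w.map (SimpleGraph.Embedding.induce S).toHom).support := hv'
  rw [SimpleGraph.Walk.support_map] at hv'
  obtain ⟨u, _, rfl⟩ := List.mem_map.mp hv'
  exact u.2

/-- If two distinct voters have exactly reversed preference orders and the profile is
single-peaked on a tree `T` (with at least two candidates), then `T` is a path whose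
edges are exactly the pairs of consecutive candidates in the first voter's ranking. -/
theorem stmt15 {V C : Type*} [Fintype C] (hC : 2 ≤ Fintype.card C)
    (pref : V → C → C → Prop) (hlin : ∀ i, IsStrictTotalOrder C (pref i))
    (i₁ i₂ : V) (hne : i₁ ≠ i₂)
    (hrev : ∀ a b : C, pref i₁ a b ↔ pref i₂ b a)
    (T : SimpleGraph C) (hT : T.IsTree)
    (hsp : ∀ (i : V) (a : C), (T.induce {b | pref i b a}).Preconnected) :
    (∀ x y : C, T.Adj x y ↔
        ((pref i₁ x y ∧ ∀ c, ¬ (pref i₁ x c ∧ pref i₁ c y)) ∨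
         (pref i₁ y x ∧ ∀ c, ¬ (pref i₁ y c ∧ pref i₁ c x)))) ∧
    (∃ a b : C, a ≠ b ∧ ∀ c : C, (∃! d, T.Adj c d) ↔ (c = a ∨ c = b)) := by
  classical
  haveI := hlin i₁
  letI : LinearOrder C := linearOrderOfSTO (pref i₁)
  have hlt : ∀ a b : C, pref i₁ a b ↔ a < b := fun _ _ => Iff.rfl
  have hU := hT.existsUnique_path
  -- connected sets: strict lower and strict upper sets
  have hconn_lt : ∀ a x y : C, x < a → y < a →
      ∃ p : T.Walk x y, p.IsPath ∧ ∀ v ∈ p.support, v < a := by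
    intro a x y hx hy
    have h := hsp i₁ a
    exact aux_walk_in h hx hy
  have hconn_gt : ∀ a x y : C, a < x → a < y →
      ∃ p : T.Walk x y, p.IsPath ∧ ∀ v ∈ p.support, a < v := by
    intro a x y hx hy
    have hset : ({b | pref i₂ b a} : Set C) = {b | a < b} := by
      ext b
      simp only [Set.mem_setOf_eq]
      exact (hrev a b).symm
    have h := hsp i₂ a
    rw [hset] at h
    exact aux_walk_in h hx hy
  -- a path whose support is contained in {x, y} witnesses an edge
  have path_adj : ∀ (x y : C) (p : T.Walk x y), p.IsPath → x ≠ y →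
      (∀ v ∈ p.support, v = x ∨ v = y) → T.Adj x y := by
    intro x y p hp hxy hsub
    cases p with
    | nil => exact absurd rfl hxy
    | cons h q =>
      rename_i u
      have hu : u ∈ (SimpleGraph.Walk.cons h q).support := by
        simp [SimpleGraph.Walk.support_cons, q.start_mem_support]
      rcases hsub u hu with rfl | rfl
      · exact absurd rfl h.ne
      · exact h
  -- adjacency implies covering
  have key : ∀ x y : C, T.Adj x y → x < y → x ⋖ y := by
    intro x y hadj hxy
    refine ⟨hxy, fun c hxc hcy => ?_⟩
    obtain ⟨p1, hp1, hs1⟩ := hconn_lt y c x hcy hxy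
    obtain ⟨p2, hp2, hs2⟩ := hconn_gt x c y hxc hxy
    have hq : (p1.concat hadj).IsPath := by
      rw [SimpleGraph.Walk.isPath_def, SimpleGraph.Walk.support_concat]
      rw [List.nodup_append, ← List.disjoint_iff_ne]
      refine ⟨hp1.support_nodup, List.nodup_singleton y, ?_⟩
      intro v hv hv'
      rw [List.mem_singleton] at hv'
      exact lt_irrefl _ (hv' ▸ hs1 v hv)
    have heq : p1.concat hadj = p2 := (hU c y).unique hq hp2
    have hxmem : x ∈ (p1.concat hadj).support := by
      rw [SimpleGraph.Walk.support_concat]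
      exact List.mem_append_left _ p1.end_mem_support
    rw [heq] at hxmem
    exact lt_irrefl x (hs2 x hxmem)
  -- covering implies adjacency
  have cov_adj : ∀ x y : C, x ⋖ y → T.Adj x y := by
    intro x y hcov
    obtain ⟨p, hp, -⟩ := hU x y
    refine path_adj x y p hp hcov.1.ne (fun v hv => ?_)
    by_contra hcon
    push_neg at hcon
    obtain ⟨hvx, hvy⟩ := hcon
    rcases lt_trichotomy v y with hlt' | rfl | hgt'
    · rcases lt_trichotomy v x with hvx' | rfl | hxv'
      · obtain ⟨q, hq, hsq⟩ := hconn_gt v x y hvx' (hvx'.trans hcov.1)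
        have : q = p := (hU x y).unique hq hp
        rw [this] at hsq
        exact lt_irrefl v (hsq v hv)
      · exact hvx rfl
      · exact hcov.2 hxv' hlt'
    · exact hvy rfl
    · obtain ⟨q, hq, hsq⟩ := hconn_lt v x y (hcov.1.trans hgt') hgt'
      have : q = p := (hU x y).unique hq hp
      rw [this] at hsq
      exact lt_irrefl v (hsq v hv)
  -- adjacency characterization
  have hadj : ∀ x y : C, T.Adj x y ↔ (x ⋖ y ∨ y ⋖ x) := by
    intro x y
    constructor
    · intro h
      rcases lt_or_gt_of_ne h.ne with hlt' | hgt'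
      · exact Or.inl (key x y h hlt')
      · exact Or.inr (key y x h.symm hgt')
    · rintro (h | h)
      · exact cov_adj x y h
      · exact (cov_adj y x h).symm
  constructor
  · intro x y
    rw [hadj x y]
    constructor
    · rintro (h | h)
      · exact Or.inl ⟨h.1, fun c hc => h.2 hc.1 hc.2⟩
      · exact Or.inr ⟨h.1, fun c hc => h.2 hc.1 hc.2⟩
    · rintro (⟨h1, h2⟩ | ⟨h1, h2⟩)
      · exact Or.inl ⟨h1, fun c hc hc' => h2 c ⟨hc, hc'⟩⟩
      · exact Or.inr ⟨h1, fun c hc hc' => h2 c ⟨hc, hc'⟩⟩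
  -- second part: T is a path with endpoints the min and max
  · haveI : Nonempty C := Fintype.card_pos_iff.mp (by omega)
    have hne' : (Finset.univ : Finset C).Nonempty := Finset.univ_nonempty
    set a := Finset.univ.min' hne' with ha_def
    set b := Finset.univ.max' hne' with hb_def
    have ha : ∀ c : C, a ≤ c := fun c => Finset.min'_le _ _ (Finset.mem_univ c)
    have hb : ∀ c : C, c ≤ b := fun c => Finset.le_max' _ _ (Finset.mem_univ c)
    have hab : a ≠ b := by
      obtain ⟨x, y, hxy⟩ := Fintype.exists_pair_of_one_lt_card (α := C) (by omega)
      intro h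
      apply hxy
      have hx : x = a := le_antisymm (h ▸ hb x) (ha x)
      have hy : y = a := le_antisymm (h ▸ hb y) (ha y)
      rw [hx, hy]
    have hsucc : ∀ c z : C, c < z → ∃ d, c ⋖ d := by
      intro c z hz
      set s := Finset.univ.filter (fun x => c < x) with hs_def
      have hs : s.Nonempty := ⟨z, by simp [hs_def, hz]⟩
      refine ⟨s.min' hs, ?_, fun e hce hed => ?_⟩
      · have := Finset.min'_mem s hs
        simpa [hs_def] using this
      · exact absurd (Finset.min'_le s e (by simp [hs_def, hce])) (not_le.mpr hed)
    have hpred : ∀ c z : C, z < c → ∃ d, d ⋖ c := by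
      intro c z hz
      set s := Finset.univ.filter (fun x => x < c) with hs_def
      have hs : s.Nonempty := ⟨z, by simp [hs_def, hz]⟩
      refine ⟨s.max' hs, ?_, fun e hce hed => ?_⟩
      · have := Finset.max'_mem s hs
        simpa [hs_def] using this
      · exact absurd (Finset.le_max' s e (by simp [hs_def, hed])) (not_le.mpr hce)
    have succ_unique : ∀ c d d' : C, c ⋖ d → c ⋖ d' → d = d' := by
      intro c d d' h h'
      rcases lt_trichotomy d d' with hlt' | heq | hgt'
      · exact absurd hlt' (h'.2 h.1)
      · exact heq
      · exact absurd hgt' (h.2 h'.1)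
    have pred_unique : ∀ c d d' : C, d ⋖ c → d' ⋖ c → d = d' := by
      intro c d d' h h'
      rcases lt_trichotomy d d' with hlt' | heq | hgt'
      · exact absurd h'.1 (h.2 hlt')
      · exact heq
      · exact absurd h.1 (h'.2 hgt')
    have haltb : a < b := lt_of_le_of_ne (ha b) hab
    refine ⟨a, b, hab, fun c => ?_⟩
    constructor
    · rintro ⟨d, hd, hdu⟩
      by_contra hor
      push_neg at hor
      obtain ⟨hca, hcb⟩ := hor
      have hac : a < c := lt_of_le_of_ne (ha c) (Ne.symm hca)
      have hcb' : c < b := lt_of_le_of_ne (hb c) hcb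
      obtain ⟨d1, hd1⟩ := hpred c a hac
      obtain ⟨d2, hd2⟩ := hsucc c b hcb'
      have h1 : d1 = d := hdu d1 ((hadj c d1).mpr (Or.inr hd1))
      have h2 : d2 = d := hdu d2 ((hadj c d2).mpr (Or.inl hd2))
      have : d1 < d2 := hd1.1.trans hd2.1
      rw [h1, h2] at this
      exact lt_irrefl d this
    · rintro (rfl | rfl)
      · obtain ⟨d, hd⟩ := hsucc a b haltb
        refine ⟨d, (hadj a d).mpr (Or.inl hd), fun d' h' => ?_⟩
        rcases (hadj a d').mp h' with h'' | h''
        · exact succ_unique a d' d h'' hd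
        · exact absurd (ha d') (not_le.mpr h''.1)
      · obtain ⟨d, hd⟩ := hpred b a haltb
        refine ⟨d, (hadj b d).mpr (Or.inr hd), fun d' h' => ?_⟩
        rcases (hadj b d').mp h' with h'' | h''
        · exact absurd (hb d') (not_le.mpr h''.1)
        · exact pred_unique b d' d h'' hd
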